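/- Let X be a separable F-space and let (T_a)_{a∈ℝ^d} be a strongly continuous operator group on X with the uniform mixing property. Then the set ⋂_{a∈ℝ^d∖{0}} HC(T_a) of common hypercyclic vectors is a residual (comeagre) subset of X. -/

import Mathlib

open Set Metric Filter TopologicalSpace

set_option linter.unusedSectionVars false
set_option linter.unusedVariables false
set_option maxHeartbeats 1000000

section Aux
variable {X : Type*} [AddCommGroup X] [Module ℝ X] [MetricSpace X]
    [IsTopologicalAddGroup X] [ContinuousSMul ℝ X]

lemma aux_dist_sub' (hinv : ∀ x y z : X, dist (x + z) (y + z) = dist x y) (x y : X) :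
    dist (x - y) 0 = dist x y := by
  have := hinv (x - y) 0 y
  rw [sub_add_cancel, zero_add] at this
  exact this.symm

lemma aux_uag' (hinv : ∀ x y z : X, dist (x + z) (y + z) = dist x y) :
    IsUniformAddGroup X := by
  constructor
  rw [Metric.uniformContinuous_iff]
  intro ε hε
  refine ⟨ε/2, half_pos hε, ?_⟩
  rintro ⟨a, b⟩ ⟨a', b'⟩ h
  rw [Prod.dist_eq] at h
  simp only [max_lt_iff] at h
  have h1 : dist (a - b) (a' - b) = dist a a' := by
    simpa [sub_eq_add_neg] using hinv a a' (-b)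
  have h2 : dist (a' - b) (a' - b') = dist b b' := by
    have e1 := hinv (-b) (-b') a'
    have e2 := hinv (-b) (-b') (b + b')
    have e3 : a' - b = -b + a' := by abel
    have e4 : a' - b' = -b' + a' := by abel
    have e5 : -b + (b + b') = b' := by abel
    have e6 : -b' + (b + b') = b := by abel
    rw [e5, e6] at e2
    rw [e3, e4, e1, ← e2, dist_comm]
  calc dist (a - b) (a' - b') ≤ dist (a - b) (a' - b) + dist (a' - b) (a' - b') :=
        dist_triangle _ _ _
    _ = dist a a' + dist b b' := by rw [h1, h2]
    _ < ε/2 + ε/2 := by exact add_lt_add h.1 h.2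
    _ = ε := add_halves ε

lemma aux_equicont0 [CompleteSpace X]
    (hinv : ∀ x y z : X, dist (x + z) (y + z) = dist x y)
    {d : ℕ} (T : EuclideanSpace ℝ (Fin d) → X →L[ℝ] X)
    (hsc : ∀ x : X, Continuous fun a => T a x) {ε : ℝ} (hε : 0 < ε) :
    ∃ ρ > 0, ∀ c : EuclideanSpace ℝ (Fin d), ‖c‖ ≤ 1 → ∀ v : X, dist v 0 < ρ →
      dist (T c v) 0 ≤ ε := by
  haveI := aux_uag' hinv
  set F : ℕ → Set X := fun n =>
    ⋂ c ∈ closedBall (0:EuclideanSpace ℝ (Fin d)) 1, (fun y => T c (((n:ℝ)+1)⁻¹ • y)) ⁻¹' (closedBall (0:X) (ε/2))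
    with hF
  have hclosed : ∀ n, IsClosed (F n) := fun n =>
    isClosed_biInter fun c _ =>
      Metric.isClosed_closedBall.preimage ((T c).continuous.comp (continuous_const_smul _))
  have hcover : ∀ y : X, ∃ n, y ∈ F n := by
    intro y
    have hcomp : IsCompact ((fun c => T c y) '' closedBall (0:EuclideanSpace ℝ (Fin d)) 1) :=
      (isCompact_closedBall (0:EuclideanSpace ℝ (Fin d)) 1).image (hsc y)
    have hbd := hcomp.totallyBounded.isVonNBounded ℝ
    have habs := hbd (Metric.ball_mem_nhds (0:X) (by positivity : (0:ℝ) < ε/2))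
    rw [absorbs_iff_norm] at habs
    obtain ⟨r, hr⟩ := habs
    set n := ⌈r⌉₊ with hn
    have hrn : r ≤ ‖((n:ℝ)+1)‖ := by
      rw [Real.norm_eq_abs, abs_of_nonneg (by positivity)]
      calc r ≤ (n:ℝ) := Nat.le_ceil r
        _ ≤ (n:ℝ) + 1 := by linarith
    have hsub := hr ((n:ℝ)+1) hrn
    refine ⟨n, ?_⟩
    simp only [hF, mem_iInter, mem_preimage]
    intro c hc
    have hmem := hsub ⟨c, hc, rfl⟩
    obtain ⟨w, hw, hwe⟩ := Set.mem_smul_set.1 hmem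
    have hne : ((n:ℝ)+1) ≠ 0 := by positivity
    have hwe' : ((n:ℝ)+1) • w = T c y := hwe
    have hkey : T c (((n:ℝ)+1)⁻¹ • y) = w := by
      rw [map_smul, ← hwe', smul_smul, inv_mul_cancel₀ hne, one_smul]
    rw [hkey]
    exact ball_subset_closedBall hw
  obtain ⟨n, hn⟩ := nonempty_interior_of_iUnion_of_closed hclosed
    (eq_univ_iff_forall.2 fun y => mem_iUnion.2 (hcover y))
  obtain ⟨y1, hy1⟩ := hn
  rw [mem_interior_iff_mem_nhds, Metric.mem_nhds_iff] at hy1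
  obtain ⟨ρ1, hρ1, hball⟩ := hy1
  have hcont : ContinuousAt (fun v : X => ((n:ℝ)+1) • v) 0 :=
    (continuous_const_smul _).continuousAt
  rw [Metric.continuousAt_iff] at hcont
  obtain ⟨ρ, hρ, hcont⟩ := hcont ρ1 hρ1
  refine ⟨ρ, hρ, fun c hc v hv => ?_⟩
  have hne : ((n:ℝ)+1) ≠ 0 := by positivity
  set w := ((n:ℝ)+1) • v with hwdef
  have hwv : ((n:ℝ)+1)⁻¹ • w = v := by
    rw [hwdef, smul_smul, inv_mul_cancel₀ hne, one_smul]
  have hw0 : dist w 0 < ρ1 := by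
    have := hcont hv
    simpa [smul_zero] using this
  have hmem1 : y1 + w ∈ F n := by
    apply hball
    rw [mem_ball]
    have : dist (y1 + w) y1 = dist w 0 := by
      have := hinv w 0 y1
      rwa [zero_add, add_comm w y1] at this
    rw [this]; exact hw0
  have hmem2 : y1 ∈ F n := hball (mem_ball_self hρ1)
  simp only [hF, mem_iInter, mem_preimage] at hmem1 hmem2
  have hc' : c ∈ closedBall (0:EuclideanSpace ℝ (Fin d)) 1 := by
    rw [mem_closedBall, dist_zero_right]; exact hc
  have hA := hmem1 c hc'
  have hB := hmem2 c hc'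
  have hkey : T c v = T c (((n:ℝ)+1)⁻¹ • (y1 + w)) - T c (((n:ℝ)+1)⁻¹ • y1) := by
    rw [← map_sub]
    congr 1
    rw [smul_add, add_sub_cancel_left, hwv]
  rw [hkey, aux_dist_sub' hinv]
  calc dist (T c (((n:ℝ)+1)⁻¹ • (y1 + w))) (T c (((n:ℝ)+1)⁻¹ • y1))
      ≤ dist (T c (((n:ℝ)+1)⁻¹ • (y1 + w))) 0 + dist (T c (((n:ℝ)+1)⁻¹ • y1)) 0 := by
        rw [dist_comm (T c (((n:ℝ)+1)⁻¹ • y1)) 0]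
        exact dist_triangle _ _ _
    _ ≤ ε/2 + ε/2 := add_le_add (mem_closedBall.1 hA) (mem_closedBall.1 hB)
    _ = ε := add_halves ε

lemma aux_nbhd' [CompleteSpace X]
    (hinv : ∀ x y z : X, dist (x + z) (y + z) = dist x y)
    {d : ℕ} (T : EuclideanSpace ℝ (Fin d) → X →L[ℝ] X)
    (hid : T 0 = ContinuousLinearMap.id ℝ X)
    (hsc : ∀ x : X, Continuous fun a => T a x) {ε : ℝ} (hε : 0 < ε) (y0 : X) :
    ∃ δ η : ℝ, 0 < δ ∧ 0 < η ∧ ∀ c : EuclideanSpace ℝ (Fin d), ‖c‖ ≤ δ → ∀ y : X,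
      dist y y0 < η → dist (T c y) y0 ≤ ε := by
  obtain ⟨ρ, hρ, hρ2⟩ := aux_equicont0 hinv T hsc (half_pos hε)
  have hca : ContinuousAt (fun c => T c y0) 0 := (hsc y0).continuousAt
  rw [Metric.continuousAt_iff] at hca
  obtain ⟨δ0, hδ0, hδ⟩ := hca (ε/2) (half_pos hε)
  refine ⟨min (δ0/2) 1, ρ, by positivity, hρ, fun c hc y hy => ?_⟩
  have hc1 : ‖c‖ ≤ 1 := le_trans hc (min_le_right _ _)
  have hc0 : dist c 0 < δ0 := by
    rw [dist_zero_right]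
    exact lt_of_le_of_lt (le_trans hc (min_le_left _ _)) (by linarith)
  have h1 : dist (T c y0) y0 < ε/2 := by
    have := hδ hc0
    simpa [hid] using this
  have h2 : dist (T c y) (T c y0) ≤ ε/2 := by
    have hsub : dist (y - y0) 0 < ρ := by rw [aux_dist_sub' hinv]; exact hy
    have := hρ2 c hc1 (y - y0) hsub
    rw [map_sub, aux_dist_sub' hinv] at this
    exact this
  calc dist (T c y) y0 ≤ dist (T c y) (T c y0) + dist (T c y0) y0 := dist_triangle _ _ _
    _ ≤ ε/2 + ε/2 := add_le_add h2 h1.le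
    _ = ε := add_halves ε

end Aux

lemma aux_pigeon {d : ℕ} {C δ : ℝ} (hC : 0 < C) (hδ : 0 < δ) (v : EuclideanSpace ℝ (Fin d)) :
    ∃ (k : ℕ) (b : EuclideanSpace ℝ (Fin d)) (z : Fin d → ℤ), 1 ≤ k ∧
      (∀ i, b i = C * z i) ∧ ‖(k:ℝ) • v - b‖ ≤ δ := by
  classical
  set Q : ℕ := ⌈Real.sqrt d * C / δ⌉₊ + 1 with hQ
  have hQpos : 0 < Q := Nat.succ_pos _
  have hfr : ∀ (j : ℕ) (i : Fin d), (0:ℤ) ≤ ⌊Int.fract ((j * v i) / C) * Q⌋ := by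
    intro j i
    apply Int.floor_nonneg.2
    apply mul_nonneg (Int.fract_nonneg _) (by positivity)
  have hfrlt : ∀ (j : ℕ) (i : Fin d), ⌊Int.fract ((j * v i) / C) * Q⌋ < (Q:ℤ) := by
    intro j i
    apply Int.floor_lt.2
    have h1 : Int.fract ((j * v i) / C) < 1 := Int.fract_lt_one _
    have h2 : (0:ℝ) < (Q:ℝ) := by exact_mod_cast hQpos
    push_cast
    nlinarith
  set g : ℕ → (Fin d → Fin Q) := fun j i =>
    ⟨(⌊Int.fract ((j * v i) / C) * Q⌋).toNat, by
      have := hfrlt j i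
      omega⟩ with hg
  have hmaps : ∀ j ∈ Finset.range (Q^d + 1), g j ∈ (Finset.univ : Finset (Fin d → Fin Q)) :=
    fun j _ => Finset.mem_univ _
  have hcard : (Finset.univ : Finset (Fin d → Fin Q)).card < (Finset.range (Q^d + 1)).card := by
    rw [Finset.card_univ, Finset.card_range, Fintype.card_fun]
    simp
  obtain ⟨k1, hk1, k2, hk2, hne, hgeq⟩ :=
    Finset.exists_ne_map_eq_of_card_lt_of_maps_to hcard hmaps
  -- wlog k1 < k2
  wlog hlt : k1 < k2 generalizing k1 k2
  · exact this k2 hk2 k1 hk1 hne.symm hgeq.symm (by omega)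
  set k := k2 - k1 with hk
  set z : Fin d → ℤ := fun i => ⌊(k2 * v i) / C⌋ - ⌊(k1 * v i) / C⌋ with hz
  refine ⟨k, (WithLp.equiv 2 (∀ _ : Fin d, ℝ)).symm (fun i => C * z i), z, by omega, ?_, ?_⟩
  · intro i
    simp [WithLp.equiv_symm_apply, PiLp.toLp_apply]
  · have hcoord : ∀ i : Fin d, |(k:ℝ) * v i - C * z i| ≤ C / Q := by
      intro i
      have hfl : ⌊Int.fract ((k2 * v i) / C) * Q⌋ = ⌊Int.fract ((k1 * v i) / C) * Q⌋ := by
        have := congrFun hgeq i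
        simp only [hg, Fin.mk_eq_mk] at this
        have h1 := hfr k2 i
        have h2 := hfr k1 i
        omega
      have habs := Int.abs_sub_lt_one_of_floor_eq_floor hfl
      rw [← sub_mul, abs_mul, abs_of_nonneg (by positivity : (0:ℝ) ≤ (Q:ℝ))] at habs
      have hQR : (0:ℝ) < Q := by exact_mod_cast hQpos
      have habs2 : |Int.fract ((k2 * v i) / C) - Int.fract ((k1 * v i) / C)| < 1 / Q := by
        rw [lt_div_iff₀ hQR]
        exact habs
      have hks : (k:ℝ) = (k2:ℝ) - (k1:ℝ) := by
        rw [hk]; exact_mod_cast Nat.cast_sub hlt.le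
      have hfract : Int.fract ((k2 * v i) / C) - Int.fract ((k1 * v i) / C)
          = (k:ℝ) * v i / C - z i := by
        simp only [Int.fract, hz, hks]
        push_cast
        ring
      rw [hfract] at habs2
      have : |(k:ℝ) * v i / C - z i| * C ≤ (1/Q) * C :=
        mul_le_mul_of_nonneg_right habs2.le hC.le
      calc |(k:ℝ) * v i - C * z i| = |(k:ℝ) * v i / C - z i| * C := by
            rw [show (k:ℝ) * v i - C * z i = ((k:ℝ) * v i / C - z i) * C by field_simp,
              abs_mul, abs_of_pos hC]
        _ ≤ (1/Q) * C := this
        _ = C / Q := by ring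
    -- now norm bound
    have hrw : ∀ i : Fin d, ((k:ℝ) • v - (WithLp.equiv 2 (∀ _ : Fin d, ℝ)).symm
        (fun i => C * z i)) i = (k:ℝ) * v i - C * z i := by
      intro i
      simp [WithLp.equiv_symm_apply, PiLp.toLp_apply, PiLp.sub_apply, PiLp.smul_apply, smul_eq_mul]
    rw [EuclideanSpace.norm_eq]
    have hsum : ∑ i : Fin d, ‖((k:ℝ) • v - (WithLp.equiv 2 (∀ _ : Fin d, ℝ)).symm
        (fun i => C * z i)) i‖ ^ 2 ≤ (d : ℝ) * (C/Q)^2 := by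
      calc ∑ i : Fin d, ‖((k:ℝ) • v - (WithLp.equiv 2 (∀ _ : Fin d, ℝ)).symm
          (fun i => C * z i)) i‖ ^ 2 ≤ ∑ _i : Fin d, (C/Q)^2 := by
            apply Finset.sum_le_sum
            intro i _
            rw [hrw i, Real.norm_eq_abs]
            have := hcoord i
            have habs : (0:ℝ) ≤ |(k:ℝ) * v i - C * z i| := abs_nonneg _
            nlinarith
        _ = (d:ℝ) * (C/Q)^2 := by
            rw [Finset.sum_const, Finset.card_univ, Fintype.card_fin, nsmul_eq_mul]
    calc Real.sqrt (∑ i : Fin d, ‖((k:ℝ) • v - (WithLp.equiv 2 (∀ _ : Fin d, ℝ)).symm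
        (fun i => C * z i)) i‖ ^ 2) ≤ Real.sqrt ((d:ℝ) * (C/Q)^2) := Real.sqrt_le_sqrt hsum
      _ = Real.sqrt d * (C/Q) := by
          rw [Real.sqrt_mul (by positivity), Real.sqrt_sq (by positivity)]
      _ ≤ δ := by
          have hQR : (0:ℝ) < (Q:ℝ) := by exact_mod_cast hQpos
          have h1 : Real.sqrt d * C / δ ≤ (Q:ℝ) := by
            calc Real.sqrt d * C / δ ≤ (⌈Real.sqrt d * C / δ⌉₊ : ℝ) := Nat.le_ceil _
              _ ≤ (Q:ℝ) := by exact_mod_cast Nat.le_succ _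
          have h2 : Real.sqrt d * C ≤ (Q:ℝ) * δ := (div_le_iff₀ hδ).1 h1
          rw [show Real.sqrt d * (C/(Q:ℝ)) = (Real.sqrt d * C)/(Q:ℝ) by ring,
            div_le_iff₀ hQR]
          nlinarith

lemma aux_coord {d : ℕ} (x : EuclideanSpace ℝ (Fin d)) (i : Fin d) : |x i| ≤ ‖x‖ := by
  rw [EuclideanSpace.norm_eq]
  calc |x i| = Real.sqrt (‖x i‖^2) := by
        rw [Real.norm_eq_abs, Real.sqrt_sq_eq_abs, abs_abs]
    _ ≤ Real.sqrt (∑ j, ‖x j‖^2) :=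
      Real.sqrt_le_sqrt (Finset.single_le_sum (f := fun j => ‖x j‖^2)
        (fun j _ => by positivity) (Finset.mem_univ i))

lemma aux_sep' {d : ℕ} {C : ℝ} (hC : 0 < C) {b b' : EuclideanSpace ℝ (Fin d)}
    {z z' : Fin d → ℤ} (hb : ∀ i, b i = C * z i) (hb' : ∀ i, b' i = C * z' i)
    (hne : b ≠ b') : C ≤ ‖b - b'‖ := by
  have hex : ∃ i, b i ≠ b' i := by
    by_contra h
    push_neg at h
    exact hne (PiLp.ext h)
  obtain ⟨i, hi⟩ := hex
  have hzne : z i ≠ z' i := by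
    intro h
    apply hi
    rw [hb i, hb' i, h]
  have h1 : (1:ℝ) ≤ |(z i : ℝ) - (z' i : ℝ)| := by
    have : (1:ℤ) ≤ |z i - z' i| := Int.one_le_abs (sub_ne_zero.2 hzne)
    calc (1:ℝ) = ((1:ℤ):ℝ) := by norm_num
      _ ≤ ((|z i - z' i| : ℤ) : ℝ) := by exact_mod_cast this
      _ = |(z i : ℝ) - (z' i : ℝ)| := by push_cast [Int.cast_abs]; ring_nf
  calc C = C * 1 := (mul_one C).symm
    _ ≤ C * |(z i : ℝ) - (z' i : ℝ)| := by nlinarith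
    _ = |b i - b' i| := by rw [hb i, hb' i, ← mul_sub, abs_mul, abs_of_pos hC]
    _ = |(b - b') i| := by rw [PiLp.sub_apply]
    _ ≤ ‖b - b'‖ := aux_coord _ i


lemma aux_star' {d : ℕ} {C δ m' : ℝ} (hC : 0 < C) (hδ : 0 < δ) (hm' : 1 ≤ m')
    (a : EuclideanSpace ℝ (Fin d)) (ha : 1/m' ≤ ‖a‖) :
    ∃ (n : ℕ) (b : EuclideanSpace ℝ (Fin d)) (z : Fin d → ℤ),
      (∀ i, b i = C * z i) ∧ C ≤ ‖b‖ ∧ ‖((n:ℝ)+1) • a - b‖ ≤ δ/2 := by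
  have hm0 : (0:ℝ) < m' := lt_of_lt_of_le one_pos hm'
  set N0 : ℕ := ⌈m' * (C + δ)⌉₊ + 1 with hN0
  have hN0ge : m' * (C + δ) ≤ (N0:ℝ) := by
    calc m' * (C + δ) ≤ (⌈m' * (C + δ)⌉₊ : ℝ) := Nat.le_ceil _
      _ ≤ (N0:ℝ) := by exact_mod_cast Nat.le_succ _
  have hN0pos : 1 ≤ N0 := Nat.succ_le_succ (Nat.zero_le _)
  obtain ⟨k, b, z, hk, hbz, hnear⟩ := aux_pigeon hC (half_pos hδ) ((N0:ℝ) • a)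
  have hkN0 : 1 ≤ k * N0 := Nat.one_le_iff_ne_zero.2 (by positivity)
  refine ⟨k * N0 - 1, b, z, hbz, ?_, ?_⟩
  · -- C ≤ ‖b‖
    have he : (k:ℝ) • ((N0:ℝ) • a) = ((k*N0 : ℕ):ℝ) • a := by
      rw [smul_smul]; push_cast; ring_nf
    rw [he] at hnear
    have hnorm : ‖((k*N0 : ℕ):ℝ) • a‖ = ((k*N0 : ℕ):ℝ) * ‖a‖ := by
      rw [norm_smul, Real.norm_eq_abs, abs_of_nonneg (by positivity)]
    have hlow : C + δ/2 ≤ ((k*N0 : ℕ):ℝ) * ‖a‖ := by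
      have h1 : (N0:ℝ) ≤ ((k*N0:ℕ):ℝ) := by
        push_cast
        nlinarith [(Nat.one_le_cast (α := ℝ)).2 hk]
      have h2 : (N0:ℝ) * (1/m') ≤ ((k*N0:ℕ):ℝ) * ‖a‖ := by
        apply mul_le_mul h1 ha (by positivity) (by positivity)
      have h3 : C + δ ≤ (N0:ℝ) * (1/m') := by
        rw [mul_one_div, le_div_iff₀ hm0]
        nlinarith
      nlinarith
    have htri : ‖((k*N0 : ℕ):ℝ) • a‖ - ‖b‖ ≤ δ/2 :=
      le_trans (norm_sub_norm_le _ _) hnear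
    rw [hnorm] at htri
    linarith
  · -- approx
    have hcast : ((k * N0 - 1 : ℕ):ℝ) + 1 = ((k*N0:ℕ):ℝ) := by
      rw [Nat.cast_sub hkN0]
      push_cast
      ring
    rw [hcast]
    have he : (k:ℝ) • ((N0:ℝ) • a) = ((k*N0 : ℕ):ℝ) • a := by
      rw [smul_smul]; push_cast; ring_nf
    rw [he] at hnear
    exact hnear

section Aux2
variable {X : Type*} [AddCommGroup X] [Module ℝ X] [MetricSpace X]
    [IsTopologicalAddGroup X] [ContinuousSMul ℝ X]

lemma aux_dense [CompleteSpace X]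
    (hinv : ∀ x y z : X, dist (x + z) (y + z) = dist x y)
    {d : ℕ} (T : EuclideanSpace ℝ (Fin d) → X →L[ℝ] X)
    (hid : T 0 = ContinuousLinearMap.id ℝ X)
    (hadd : ∀ a b, T (a + b) = (T a).comp (T b))
    (hsc : ∀ x : X, Continuous fun a => T a x)
    (hmix : ∀ U V : Set X, IsOpen U → IsOpen V → U.Nonempty → V.Nonempty →
      ∃ C > (0:ℝ), ∀ p : ℕ, 1 ≤ p → ∀ a : Fin p → EuclideanSpace ℝ (Fin d),
        (∀ i, C ≤ ‖a i‖) → (∀ i j, i ≠ j → C ≤ ‖a i - a j‖) →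
        ∃ f ∈ U, ∀ j, T (a j) f ∈ V)
    {m' : ℝ} (hm' : 1 ≤ m') {V : Set X} (hVo : IsOpen V) (hVne : V.Nonempty) :
    Dense (interior {x : X | ∀ a : EuclideanSpace ℝ (Fin d), 1/m' ≤ ‖a‖ → ‖a‖ ≤ m' →
      ∃ n : ℕ, T (((n:ℝ)+1) • a) x ∈ V}) := by
  classical
  set A : Set X := {x : X | ∀ a : EuclideanSpace ℝ (Fin d), 1/m' ≤ ‖a‖ → ‖a‖ ≤ m' →
      ∃ n : ℕ, T (((n:ℝ)+1) • a) x ∈ V} with hA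
  rw [dense_iff_inter_open]
  intro U hU hUne
  set K : Set (EuclideanSpace ℝ (Fin d)) := {a | 1/m' ≤ ‖a‖ ∧ ‖a‖ ≤ m'} with hKdef
  by_cases hK : K.Nonempty
  swap
  · -- K empty: A = univ
    have hAU : A = univ := by
      apply eq_univ_iff_forall.2
      intro x a h1 h2
      exact absurd ⟨a, h1, h2⟩ hK
    rw [hAU, interior_univ, inter_univ]
    exact hUne
  · obtain ⟨y0, hy0⟩ := hVne
    obtain ⟨ε, hε, hball⟩ := Metric.isOpen_iff.1 hVo y0 hy0
    obtain ⟨δ, η, hδ, hη, hLA⟩ := aux_nbhd' hinv T hid hsc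
      (show (0:ℝ) < ε/2 by positivity) y0
    obtain ⟨C, hC, hmixC⟩ := hmix U (ball y0 η) hU isOpen_ball hUne ⟨y0, mem_ball_self hη⟩
    have key : ∀ i : K, ∃ (n : ℕ) (b : EuclideanSpace ℝ (Fin d)) (z : Fin d → ℤ),
        (∀ j, b j = C * z j) ∧ C ≤ ‖b‖ ∧ ‖((n:ℝ)+1) • (i:EuclideanSpace ℝ (Fin d)) - b‖ ≤ δ/2 := by
      rintro ⟨a, ha⟩
      rw [hKdef] at ha
      exact aux_star' hC hδ hm' a ha.1
    choose nf bf zf hbz hbnorm happrox using key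
    set W : K → Set (EuclideanSpace ℝ (Fin d)) := fun i =>
      {a' | ‖((nf i:ℝ)+1) • a' - ((nf i:ℝ)+1) • (i:EuclideanSpace ℝ (Fin d))‖ < δ/2} with hW
    have hWopen : ∀ i, IsOpen (W i) := by
      intro i
      have : W i = (fun a' => ((nf i:ℝ)+1) • a' -
          ((nf i:ℝ)+1) • (i:EuclideanSpace ℝ (Fin d))) ⁻¹' (ball 0 (δ/2)) := by
        ext a'
        simp [hW, mem_ball, dist_zero_right]
      rw [this]
      exact isOpen_ball.preimage ((continuous_const_smul _).sub continuous_const)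
    have hKcomp : IsCompact K := by
      apply (isCompact_closedBall (0:EuclideanSpace ℝ (Fin d)) m').of_isClosed_subset
      · exact IsClosed.inter (isClosed_le continuous_const continuous_norm)
          (isClosed_le continuous_norm continuous_const)
      · exact fun a ha => mem_closedBall_zero_iff.2 ha.2
    have hcover : K ⊆ ⋃ i : K, W i := by
      intro a ha
      refine mem_iUnion.2 ⟨⟨a, ha⟩, ?_⟩
      simp only [hW, mem_setOf_eq, sub_self, norm_zero]
      positivity
    obtain ⟨t, ht⟩ := hKcomp.elim_finite_subcover W hWopen hcover
    set B : Finset (EuclideanSpace ℝ (Fin d)) := t.image bf with hB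
    have hBne : B.Nonempty := by
      obtain ⟨a0, ha0⟩ := hK
      have := ht ha0
      rw [mem_iUnion₂] at this
      obtain ⟨i, hi, _⟩ := this
      exact ⟨bf i, Finset.mem_image_of_mem bf hi⟩
    have hp : 1 ≤ B.card := Finset.card_pos.2 hBne
    set e := B.equivFin with he
    set aa : Fin B.card → EuclideanSpace ℝ (Fin d) := fun j => ((e.symm j : B) : _) with haa
    have haaB : ∀ j, aa j ∈ B := fun j => (e.symm j).2
    have hrep : ∀ (b : EuclideanSpace ℝ (Fin d)), b ∈ B → ∃ i ∈ t, bf i = b := by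
      intro b hb
      rw [hB, Finset.mem_image] at hb
      exact hb
    obtain ⟨f, hfU, hfV⟩ := hmixC B.card hp aa
      (by
        intro j
        obtain ⟨i, _, hib⟩ := hrep (aa j) (haaB j)
        rw [← hib]
        exact hbnorm i)
      (by
        intro j1 j2 hj
        have hne : aa j1 ≠ aa j2 := by
          intro hcon
          apply hj
          have : (e.symm j1 : B) = (e.symm j2 : B) := Subtype.coe_injective hcon
          exact e.symm.injective this
        obtain ⟨i1, _, hib1⟩ := hrep (aa j1) (haaB j1)
        obtain ⟨i2, _, hib2⟩ := hrep (aa j2) (haaB j2)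
        rw [← hib1, ← hib2]
        exact aux_sep' hC (hbz i1) (hbz i2) (by rw [hib1, hib2]; exact hne))
    set O : Set X := U ∩ ⋂ b ∈ B, (fun x => T b x) ⁻¹' (ball y0 η) with hO
    have hOopen : IsOpen O :=
      hU.inter (isOpen_biInter_finset fun b _ => isOpen_ball.preimage (T b).continuous)
    have hfO : f ∈ O := by
      refine ⟨hfU, mem_iInter₂.2 fun b hb => ?_⟩
      have : aa (e ⟨b, hb⟩) = b := by
        show ((e.symm (e ⟨b, hb⟩) : B) : EuclideanSpace ℝ (Fin d)) = b
        rw [Equiv.symm_apply_apply]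
      rw [mem_preimage, ← this]
      exact hfV (e ⟨b, hb⟩)
    have hOA : O ⊆ A := by
      intro x hx
      intro a h1 h2
      have haK : a ∈ K := ⟨h1, h2⟩
      have := ht haK
      rw [mem_iUnion₂] at this
      obtain ⟨i, hi, hWi⟩ := this
      refine ⟨nf i, ?_⟩
      have hbb : bf i ∈ B := Finset.mem_image_of_mem bf hi
      have hTb : T (bf i) x ∈ ball y0 η := mem_iInter₂.1 hx.2 (bf i) hbb
      have hcnorm : ‖((nf i:ℝ)+1) • a - bf i‖ ≤ δ := by
        have htri := dist_triangle (((nf i:ℝ)+1) • a)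
          (((nf i:ℝ)+1) • (i:EuclideanSpace ℝ (Fin d))) (bf i)
        simp only [dist_eq_norm] at htri
        have h1' : ‖((nf i:ℝ)+1) • a - ((nf i:ℝ)+1) • (i:EuclideanSpace ℝ (Fin d))‖ < δ/2 := hWi
        have h2' := happrox i
        linarith
      have heq : T (((nf i:ℝ)+1) • a) x = T ((((nf i:ℝ)+1) • a - bf i)) (T (bf i) x) := by
        rw [← ContinuousLinearMap.comp_apply, ← hadd, sub_add_cancel]
      rw [heq]
      apply hball
      rw [mem_ball]
      have := hLA _ hcnorm (T (bf i) x) (mem_ball.1 hTb)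
      linarith
    exact ⟨f, hfU, (hOopen.subset_interior_iff.2 hOA) hfO⟩

end Aux2

/-- If `(T_a)_{a ∈ ℝ^d}` is a strongly continuous operator group on a
separable F-space `X` with the uniform mixing property, then
`⋂_{a ≠ 0} HC(T_a)` is residual (comeagre) in `X`. -/
theorem stmt_0 {X : Type*} [AddCommGroup X] [Module ℝ X] [MetricSpace X]
    [CompleteSpace X] [TopologicalSpace.SeparableSpace X]
    [IsTopologicalAddGroup X] [ContinuousSMul ℝ X]
    (hinv : ∀ x y z : X, dist (x + z) (y + z) = dist x y)
    {d : ℕ} (T : EuclideanSpace ℝ (Fin d) → X →L[ℝ] X)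
    (hid : T 0 = ContinuousLinearMap.id ℝ X)
    (hadd : ∀ a b, T (a + b) = (T a).comp (T b))
    (hsc : ∀ x : X, Continuous fun a => T a x)
    (hmix : ∀ U V : Set X, IsOpen U → IsOpen V → U.Nonempty → V.Nonempty →
      ∃ C > (0:ℝ), ∀ p : ℕ, 1 ≤ p → ∀ a : Fin p → EuclideanSpace ℝ (Fin d),
        (∀ i, C ≤ ‖a i‖) → (∀ i j, i ≠ j → C ≤ ‖a i - a j‖) →
        ∃ f ∈ U, ∀ j, T (a j) f ∈ V) :
    (⋂ a ∈ {a : EuclideanSpace ℝ (Fin d) | a ≠ 0},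
      {x : X | Dense (Set.range fun n : ℕ => ((T a) ^ (n + 1)) x)}) ∈ residual X := by
  haveI : SecondCountableTopology X := UniformSpace.secondCountable_of_separable X
  obtain ⟨bs, hbc, hbne, hbasis⟩ := exists_countable_basis X
  have hpow : ∀ (a : EuclideanSpace ℝ (Fin d)) (n : ℕ), (T a)^n = T ((n:ℝ) • a) := by
    intro a n
    induction n with
    | zero => simp [hid, ContinuousLinearMap.one_def]
    | succ n ih =>
      rw [pow_succ, ih]
      have h1 : (((n+1 : ℕ)):ℝ) • a = (n:ℝ) • a + a := by
        push_cast
        rw [add_smul, one_smul]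
      rw [h1, hadd]
      rfl
  set A : ℕ → Set X → Set X := fun m V =>
    {x : X | ∀ a : EuclideanSpace ℝ (Fin d), 1/((m:ℝ)+1) ≤ ‖a‖ → ‖a‖ ≤ (m:ℝ)+1 →
      ∃ n : ℕ, T (((n:ℝ)+1) • a) x ∈ V} with hAdef
  have hAres : ∀ (m : ℕ), ∀ V ∈ bs, A m V ∈ residual X := by
    intro m V hV
    have hVne : V.Nonempty := nonempty_iff_ne_empty.2 (fun h => hbne (h ▸ hV))
    have hdense := aux_dense hinv T hid hadd hsc hmix
      (m' := (m:ℝ)+1) (by push_cast; linarith [Nat.cast_nonneg (α := ℝ) m])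
      (hbasis.isOpen hV) hVne
    rw [mem_residual]
    exact ⟨interior (A m V), interior_subset, isOpen_interior.isGδ, hdense⟩
  have hres : (⋂ m : ℕ, ⋂ V ∈ bs, A m V) ∈ residual X :=
    countable_iInter_mem.2 fun m => (countable_bInter_mem hbc).2 fun V hV => hAres m V hV
  apply mem_of_superset hres
  intro x hx
  simp only [mem_iInter] at hx
  rw [mem_iInter₂]
  intro a ha
  have ha' : a ≠ 0 := ha
  have hna : 0 < ‖a‖ := norm_pos_iff.2 ha'
  show Dense (Set.range fun n : ℕ => ((T a)^(n+1)) x)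
  rw [hbasis.dense_iff]
  intro o ho hone
  set m : ℕ := ⌈‖a‖⌉₊ + ⌈1/‖a‖⌉₊ with hm
  have h1 : ‖a‖ ≤ (m:ℝ)+1 := by
    calc ‖a‖ ≤ (⌈‖a‖⌉₊ : ℝ) := Nat.le_ceil _
      _ ≤ (m:ℝ)+1 := by
        rw [hm]; push_cast; linarith [Nat.cast_nonneg (α := ℝ) ⌈1/‖a‖⌉₊]
  have h2 : 1/((m:ℝ)+1) ≤ ‖a‖ := by
    have hc : 1/‖a‖ ≤ (m:ℝ)+1 := by
      calc 1/‖a‖ ≤ (⌈1/‖a‖⌉₊ : ℝ) := Nat.le_ceil _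
        _ ≤ (m:ℝ)+1 := by
          rw [hm]; push_cast; linarith [Nat.cast_nonneg (α := ℝ) ⌈‖a‖⌉₊]
    rw [div_le_iff₀ hna] at hc
    rw [div_le_iff₀ (by positivity)]
    nlinarith
  obtain ⟨n, hn⟩ := hx m o ho a h2 h1
  refine ⟨T (((n:ℝ)+1) • a) x, hn, ⟨n, ?_⟩⟩
  show ((T a)^(n+1)) x = _
  rw [hpow a (n+1)]
  norm_num
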